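/- For every integer n ≥ 1, the central binomial coefficient satisfies 4^n / sqrt(π(n + 1/3)) ≤ binom(2n, n) ≤ 4^n / sqrt(π(n + 1/4)). -/

import Mathlib

open Filter Real Nat Topology

noncomputable def fc (c : ℝ) (n : ℕ) : ℝ := (Nat.centralBinom n : ℝ)^2 * ((n:ℝ) + c) / 16^n

lemma fc_step (c : ℝ) (n : ℕ) :
    fc c (n+1) - fc c n
      = 4 * (Nat.centralBinom n : ℝ)^2 *
        ((2*(n:ℝ)+1)^2*((n:ℝ)+1+c) - 4*((n:ℝ)+1)^2*((n:ℝ)+c)) / (16^(n+1) * ((n:ℝ)+1)^2) := by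
  have key : ((n:ℕ)+1 : ℝ) * (Nat.centralBinom (n+1) : ℝ) = 2 * (2*(n:ℝ)+1) * (Nat.centralBinom n : ℝ) := by
    have := Nat.succ_mul_centralBinom_succ n
    have := congrArg (Nat.cast : ℕ → ℝ) this
    push_cast at this
    push_cast
    linarith
  have hne : ((n:ℝ)+1) ≠ 0 := by positivity
  have h16 : (16:ℝ)^(n+1) ≠ 0 := by positivity
  simp only [fc]
  field_simp
  push_cast
  linear_combination (((n:ℝ)+1) * (Nat.centralBinom (n+1) : ℝ) + 2 * (2*(n:ℝ)+1) * (Nat.centralBinom n : ℝ)) * (((n:ℝ)+1+c) * 16^n) * key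

lemma fc_mono : Monotone (fc (1/4)) := by
  apply monotone_nat_of_le_succ
  intro n
  have h := fc_step (1/4) n
  have hpos : (0:ℝ) < 16^(n+1) * ((n:ℝ)+1)^2 := by positivity
  have hb : (2*(n:ℝ)+1)^2*((n:ℝ)+1+1/4) - 4*((n:ℝ)+1)^2*((n:ℝ)+1/4) = 1/4 := by ring
  nlinarith [sq_nonneg ((Nat.centralBinom n : ℝ)), div_nonneg (by nlinarith [sq_nonneg ((Nat.centralBinom n : ℝ))] : (0:ℝ) ≤ 4 * (Nat.centralBinom n : ℝ)^2 * ((2*(n:ℝ)+1)^2*((n:ℝ)+1+1/4) - 4*((n:ℝ)+1)^2*((n:ℝ)+1/4))) hpos.le]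

lemma fc_anti : Antitone (fc (1/3)) := by
  apply antitone_nat_of_succ_le
  intro n
  have h := fc_step (1/3) n
  have hpos : (0:ℝ) < 16^(n+1) * ((n:ℝ)+1)^2 := by positivity
  have hb : (2*(n:ℝ)+1)^2*((n:ℝ)+1+1/3) - 4*((n:ℝ)+1)^2*((n:ℝ)+1/3) = -(n:ℝ)/3 := by ring
  have hnn : (0:ℝ) ≤ (n:ℝ) := n.cast_nonneg
  nlinarith [div_nonpos_of_nonpos_of_nonneg (by nlinarith [sq_nonneg ((Nat.centralBinom n : ℝ))] : 4 * (Nat.centralBinom n : ℝ)^2 * ((2*(n:ℝ)+1)^2*((n:ℝ)+1+1/3) - 4*((n:ℝ)+1)^2*((n:ℝ)+1/3)) ≤ 0) hpos.le]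

lemma fc_half (n : ℕ) : fc (1/2) n = (2 * Real.Wallis.W n)⁻¹ := by
  have hW := Real.Wallis.W_eq_factorial_ratio n
  have hcbn : Nat.centralBinom n * n ! * n ! = (2*n)! := by
    have h := Nat.choose_mul_factorial_mul_factorial (Nat.le_mul_of_pos_left n two_pos)
    simpa [Nat.centralBinom, two_mul, Nat.add_sub_cancel] using h
  have hcb : (Nat.centralBinom n : ℝ) * (n ! : ℝ) * (n ! : ℝ) = ((2*n)! : ℝ) := by
    exact_mod_cast congrArg (Nat.cast : ℕ → ℝ) hcbn
  have hf : ((n ! : ℝ)) ≠ 0 := by positivity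
  have h2n : (((2*n)! : ℕ) : ℝ) ≠ 0 := by positivity
  have hWpos := Real.Wallis.W_pos n
  have h16 : (16:ℝ)^n = 2^(4*n) := by rw [pow_mul]; norm_num
  have key : fc (1/2) n * (2 * Real.Wallis.W n) = 1 := by
    rw [fc, hW, ← hcb]
    have hc : ((Nat.centralBinom n : ℝ)) ≠ 0 := by
      exact_mod_cast (Nat.centralBinom_pos n).ne'
    rw [show (16:ℝ)^n = 2^(4*n) by rw [pow_mul]; norm_num]
    have h2 : ((2:ℝ)^(4*n)) ≠ 0 := by positivity
    have h3 : (2*(n:ℝ)+1) ≠ 0 := by positivity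
    push_cast
    field_simp
  exact eq_inv_of_mul_eq_one_left key

lemma fc_tendsto (c : ℝ) : Tendsto (fc c) atTop (𝓝 (1/Real.pi)) := by
  have hW : Tendsto (fun n => (2 * Real.Wallis.W n)⁻¹) atTop (𝓝 Real.pi⁻¹) := by
    have h1 : Tendsto (fun n => 2 * Real.Wallis.W n) atTop (𝓝 Real.pi) := by
      have := Real.Wallis.tendsto_W_nhds_pi_div_two.const_mul (2:ℝ)
      convert this using 2
      ring
    exact h1.inv₀ Real.pi_ne_zero
  have hhalf : Tendsto (fc (1/2)) atTop (𝓝 Real.pi⁻¹) := by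
    have : (fun n => (2 * Real.Wallis.W n)⁻¹) = fc (1/2) := by
      funext n; rw [fc_half]
    rwa [this] at hW
  have hinv : Tendsto (fun n : ℕ => ((n:ℝ) + 1/2)⁻¹) atTop (𝓝 0) := by
    apply tendsto_inv_atTop_zero.comp
    exact tendsto_atTop_add_const_right atTop (1/2 : ℝ) tendsto_natCast_atTop_atTop
  have heq : ∀ n : ℕ, fc c n = fc (1/2) n * (1 + (c - 1/2) * ((n:ℝ) + 1/2)⁻¹) := by
    intro n
    have hne : ((n:ℝ) + 1/2) ≠ 0 := by positivity
    rw [fc, fc]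
    field_simp
    ring
  have h2 : Tendsto (fun n : ℕ => 1 + (c - 1/2) * ((n:ℝ) + 1/2)⁻¹) atTop (𝓝 (1 + (c - 1/2) * 0)) :=
    (tendsto_const_nhds : Tendsto (fun _ : ℕ => (1:ℝ)) atTop _).add (hinv.const_mul (c - 1/2))
  have := hhalf.mul h2
  simp only [mul_zero, add_zero] at this
  rw [one_div]
  have heq' : fc c = fun n => fc (1/2) n * (1 + (c - 1/2) * ((n:ℝ) + 1/2)⁻¹) := funext heq
  rw [heq']
  simpa using this

/-- Bounds on the central binomial coefficient: for every `n ≥ 1`,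
`4^n / √(π(n + 1/3)) ≤ binom(2n, n) ≤ 4^n / √(π(n + 1/4))`. -/
theorem stmt11 (n : ℕ) (hn : 1 ≤ n) :
    (4 : ℝ) ^ n / Real.sqrt (Real.pi * ((n : ℝ) + 1/3)) ≤ (Nat.choose (2 * n) n : ℝ) ∧
    (Nat.choose (2 * n) n : ℝ) ≤ (4 : ℝ) ^ n / Real.sqrt (Real.pi * ((n : ℝ) + 1/4)) := by
  have hub : fc (1/4) n ≤ 1/Real.pi := fc_mono.ge_of_tendsto (fc_tendsto (1/4)) n
  have hlb : 1/Real.pi ≤ fc (1/3) n := fc_anti.le_of_tendsto (fc_tendsto (1/3)) n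
  have hpi := Real.pi_pos
  have hX4 : (0:ℝ) < Real.pi * ((n : ℝ) + 1/4) := by positivity
  have hX3 : (0:ℝ) < Real.pi * ((n : ℝ) + 1/3) := by positivity
  have hcb : ((2*n).choose n : ℝ) = (Nat.centralBinom n : ℝ) := by
    rw [Nat.centralBinom_eq_two_mul_choose]
  set A : ℝ := (Nat.centralBinom n : ℝ) with hA
  have hA0 : 0 ≤ A := by positivity
  have h16 : ((16:ℝ)^n) = ((4:ℝ)^n)^2 := by rw [← pow_mul, pow_mul']; norm_num
  have h4 : (0:ℝ) < (4:ℝ)^n := by positivity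
  rw [fc, div_le_div_iff₀ (by positivity) hpi, one_mul] at hub
  rw [fc, div_le_div_iff₀ hpi (by positivity), one_mul] at hlb
  constructor
  · rw [hcb, div_le_iff₀ (Real.sqrt_pos.mpr hX3)]
    have hsq : ((4:ℝ)^n)^2 ≤ (A * Real.sqrt (Real.pi * ((n:ℝ)+1/3)))^2 := by
      rw [mul_pow, Real.sq_sqrt hX3.le, ← h16]
      nlinarith
    have := Real.sqrt_le_sqrt hsq
    rwa [Real.sqrt_sq h4.le, Real.sqrt_sq (by positivity)] at this
  · rw [hcb, le_div_iff₀ (Real.sqrt_pos.mpr hX4)]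
    have hsq : (A * Real.sqrt (Real.pi * ((n:ℝ)+1/4)))^2 ≤ ((4:ℝ)^n)^2 := by
      rw [mul_pow, Real.sq_sqrt hX4.le, ← h16]
      nlinarith
    have := Real.sqrt_le_sqrt hsq
    rwa [Real.sqrt_sq (by positivity), Real.sqrt_sq h4.le] at this
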